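/- Let L be a complete lattice and suppose p ∈ L is strongly irreducible in L. Then p is irreducible in L, and moreover either p is a waist in L (comparable to every element of L), or there exist elements p' and q of L with p' < p and p' ≤ q such that: p ⊓ q = p'; every x ∈ L with p' ≤ x and x ⊓ q = p' satisfies x ≤ p (i.e., p is a pseudo-complement of q in the interval [p', ⊤]); and the interval [p', q] is uniform, i.e., for all x, y with p' < x ≤ q and p' < y ≤ q one has x ⊓ y ≠ p'. -/
import Mathlib


/-- An element `p` of a lattice is *strongly irreducible* if
`a ⊓ b ≤ p` implies `a ≤ p` or `b ≤ p` for all `a b`. -/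
def StronglyIrreducible {α : Type*} [SemilatticeInf α] (p : α) : Prop :=
  ∀ a b : α, a ⊓ b ≤ p → a ≤ p ∨ b ≤ p

/-- An element `p` of a meet-semilattice is *irreducible* if
`a ⊓ b ≤ p` implies `a ≤ p` or `b ≤ p` for all `a b` lying above `p`. -/
def Irreducible' {α : Type*} [SemilatticeInf α] (p : α) : Prop :=
  ∀ a b : α, p ≤ a → p ≤ b → a ⊓ b ≤ p → a ≤ p ∨ b ≤ p

/-- A strongly irreducible element `p` of a complete lattice is irreducible, and either
`p` is a waist, or `p` is a pseudo-complement in `[p', ⊤]` of some `q ≥ p'` with `p' < p`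
such that the interval `[p', q]` is uniform. -/
theorem stronglyIrreducible_structure
    {α : Type*} [CompleteLattice α] (p : α) (hp : StronglyIrreducible p) :
    Irreducible' p ∧
      ((∀ x : α, p ≤ x ∨ x ≤ p) ∨
        ∃ p' q : α, p' < p ∧ p' ≤ q ∧ p ⊓ q = p' ∧
          (∀ x : α, p' ≤ x → x ⊓ q = p' → x ≤ p) ∧
          (∀ x y : α, p' < x → x ≤ q → p' < y → y ≤ q → x ⊓ y ≠ p')) := by
  refine ⟨fun a b _ _ h => hp a b h, ?_⟩
  by_cases hw : ∀ x : α, p ≤ x ∨ x ≤ p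
  · exact Or.inl hw
  · push_neg at hw
    obtain ⟨q, hpq, hqp⟩ := hw
    refine Or.inr ⟨p ⊓ q, q, ?_, inf_le_right, rfl, ?_, ?_⟩
    · exact lt_of_le_of_ne inf_le_left (fun h => hpq (h ▸ inf_le_right))
    · intro x _ hxq
      rcases hp x q (hxq ▸ inf_le_left) with h | h
      · exact h
      · exact absurd h hqp
    · intro x y hx hxq hy hyq h
      rcases hp x y (h ▸ inf_le_left) with h' | h'
      · exact hx.not_ge (le_inf h' hxq)
      · exact hy.not_ge (le_inf h' hyq)
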